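/- The graph Q_n has exactly n + 2^{n-1} connected induced subgraphs. -/

import Mathlib

open SimpleGraph

/-- The number of connected induced subgraphs of `G`, i.e. the number of nonempty
vertex subsets of `G` inducing a connected subgraph. -/
noncomputable def numConn {V : Type*} (G : SimpleGraph V) : ℕ :=
  Nat.card {s : Finset V // (G.induce (s : Set V)).Connected}

/-- The number of `k`-vertex connected induced subgraphs of `G`. -/
noncomputable def numConnK {V : Type*} (G : SimpleGraph V) (k : ℕ) : ℕ :=
  Nat.card {s : Finset V // s.card = k ∧ (G.induce (s : Set V)).Connected}

/-- The number of connected induced subgraphs of `G` containing the vertex `v`. -/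
noncomputable def numConnAt {V : Type*} (G : SimpleGraph V) (v : V) : ℕ :=
  Nat.card {s : Finset V // v ∈ s ∧ (G.induce (s : Set V)).Connected}

/-- The star graph on `Fin n`, with center `0`. -/
def starGraph (n : ℕ) : SimpleGraph (Fin n) :=
  SimpleGraph.fromRel (fun i _ => (i : ℕ) = 0)

/-- The tadpole graph `G_{p,q}` (for `p ≥ 3`): the path `0 - 1 - ⋯ - (p+q-1)` together with
the edge `{0, p-1}` closing a cycle of length `p`; the tail of length `q` hangs at `p-1`. -/
def tadpole (p q : ℕ) : SimpleGraph (Fin (p + q)) :=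
  SimpleGraph.fromRel (fun i j => (i : ℕ) + 1 = j ∨ ((i : ℕ) = 0 ∧ (j : ℕ) = p - 1))

/-- The banner graph `B_n` (for `n ≥ 4`): a `4`-cycle `0-1-2-3-0` with `n - 4` pendant
vertices attached to vertex `0`. -/
def banner (n : ℕ) : SimpleGraph (Fin n) :=
  SimpleGraph.fromRel (fun i j =>
    ((i : ℕ) + 1 = j ∧ (j : ℕ) ≤ 3) ∨ ((i : ℕ) = 0 ∧ (j : ℕ) = 3) ∨ ((i : ℕ) = 0 ∧ 4 ≤ (j : ℕ)))

/-- The graph `Q_n` (for `n > 2`): the star on `n` vertices with center `0`, plus an edge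
joining the two leaves `1` and `2`. -/
def Qgraph (n : ℕ) : SimpleGraph (Fin n) :=
  SimpleGraph.fromRel (fun i j => (i : ℕ) = 0 ∨ ((i : ℕ) = 1 ∧ (j : ℕ) = 2))

section Aux14

lemma induce_adj_iff {V : Type*} (G : SimpleGraph V) (s : Set V) (u v : s) :
    (G.induce s).Adj u v ↔ G.Adj u v := by simp [comap_adj]

lemma exists_adj_of_reachable {V : Type*} {G : SimpleGraph V} {u v : V}
    (h : G.Reachable u v) (hne : u ≠ v) : ∃ w, G.Adj u w := by
  obtain ⟨p⟩ := h
  cases p with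
  | nil => exact absurd rfl hne
  | cons h _ => exact ⟨_, h⟩

variable {m : ℕ}

lemma qadj (i j : Fin (m+3)) : (Qgraph (m+3)).Adj i j ↔
    i ≠ j ∧ (((i:ℕ) = 0 ∨ ((i:ℕ) = 1 ∧ (j:ℕ) = 2)) ∨ ((j:ℕ) = 0 ∨ ((j:ℕ) = 1 ∧ (i:ℕ) = 2))) :=
  SimpleGraph.fromRel_adj _ i j

lemma conn_of_zero_mem (s : Finset (Fin (m+3))) (h0 : 0 ∈ s) :
    ((Qgraph (m+3)).induce (s : Set (Fin (m+3)))).Connected := by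
  have hz : (0 : Fin (m+3)) ∈ (s : Set (Fin (m+3))) := by simpa using h0
  have key : ∀ u : (s : Set (Fin (m+3))), u.val ≠ 0 →
      ((Qgraph (m+3)).induce (s : Set (Fin (m+3)))).Adj ⟨0, hz⟩ u := by
    intro u hu
    rw [induce_adj_iff, qadj]
    exact ⟨fun h => hu h.symm, Or.inl (Or.inl (by simp))⟩
  rw [connected_iff]
  refine ⟨fun u v => ?_, ⟨⟨0, hz⟩⟩⟩
  by_cases huv : u = v
  · rw [huv]
  by_cases hu : u.val = 0
  · have hu' : u = ⟨0, hz⟩ := Subtype.ext hu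
    have hv : v.val ≠ 0 := fun h => huv (by rw [hu']; exact (Subtype.ext h).symm)
    rw [hu']
    exact (key v hv).reachable
  by_cases hv : v.val = 0
  · have hv' : v = ⟨0, hz⟩ := Subtype.ext hv
    rw [hv']
    exact (key u hu).reachable.symm
  · exact (key u hu).reachable.symm.trans (key v hv).reachable

lemma conn_singleton (i : Fin (m+3)) :
    ((Qgraph (m+3)).induce (({i} : Finset (Fin (m+3))) : Set (Fin (m+3)))).Connected := by
  rw [connected_iff]
  refine ⟨fun u v => ?_, ⟨⟨i, by simp⟩⟩⟩
  have hu := u.2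
  have hv := v.2
  simp only [Finset.coe_singleton, Set.mem_singleton_iff] at hu hv
  have : u = v := Subtype.ext (hu.trans hv.symm)
  rw [this]

lemma conn_pair :
    ((Qgraph (m+3)).induce (({1,2} : Finset (Fin (m+3))) : Set (Fin (m+3)))).Connected := by
  rw [connected_iff]
  refine ⟨fun u v => ?_, ⟨⟨1, by simp⟩⟩⟩
  by_cases huv : u = v
  · rw [huv]
  have hu := u.2
  have hv := v.2
  simp only [Finset.coe_insert, Finset.coe_singleton, Set.mem_insert_iff,
    Set.mem_singleton_iff] at hu hv
  have hne : u.val ≠ v.val := fun h => huv (Subtype.ext h)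
  apply Adj.reachable
  rw [induce_adj_iff, qadj]
  refine ⟨hne, ?_⟩
  rcases hu with h | h <;> rcases hv with h' | h' <;>
    first
      | (exact absurd (h.trans h'.symm) hne)
      | simp [h, h', Fin.val_one, Fin.val_two]

lemma eq_pair_of_conn (s : Finset (Fin (m+3))) (h0 : 0 ∉ s) (h2 : 2 ≤ s.card)
    (hc : ((Qgraph (m+3)).induce (s : Set (Fin (m+3)))).Connected) :
    s = ({1,2} : Finset (Fin (m+3))) := by
  have h12 : (1 : Fin (m+3)) ≠ 2 := Fin.ne_of_val_ne (by simp [Fin.val_one, Fin.val_two, Nat.mod_eq_of_lt (show 2 < m+3 by omega)])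
  have hcard : ({1,2} : Finset (Fin (m+3))).card = 2 := Finset.card_pair h12
  have hsub : s ⊆ {1,2} := by
    intro u hu
    obtain ⟨v, hv, hvne⟩ := Finset.exists_mem_ne (s := s) (by omega) u
    have hu' : u ∈ (s : Set (Fin (m+3))) := by simpa using hu
    have hv' : v ∈ (s : Set (Fin (m+3))) := by simpa using hv
    have hr := hc.preconnected ⟨u, hu'⟩ ⟨v, hv'⟩
    obtain ⟨w, hw⟩ := exists_adj_of_reachable hr (fun h => hvne (congrArg Subtype.val h).symm)
    rw [induce_adj_iff, qadj] at hw
    have nz : ∀ x : Fin (m+3), x ∈ s → (x : ℕ) ≠ 0 := by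
      intro x hx h
      exact h0 (by rwa [show x = 0 from Fin.ext (by simp [h])] at hx)
    have hu0 : (u : ℕ) ≠ 0 := nz u hu
    have hw0 : ((w : Fin (m+3)) : ℕ) ≠ 0 := nz _ (by simpa using w.2)
    have : (u : ℕ) = 1 ∨ (u : ℕ) = 2 := by tauto
    rcases this with h | h
    · simp [Finset.mem_insert, show u = 1 from Fin.ext (by simp [h, Fin.val_one])]
    · simp [Finset.mem_insert, show u = 2 from Fin.ext (by simp [h, Fin.val_two, Nat.mod_eq_of_lt (show 2 < m+3 by omega)])]
  exact Finset.eq_of_subset_of_card_le hsub (by rw [hcard]; omega)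

lemma conn_iff (s : Finset (Fin (m+3))) :
    ((Qgraph (m+3)).induce (s : Set (Fin (m+3)))).Connected ↔
      0 ∈ s ∨ (∃ i, i ≠ (0 : Fin (m+3)) ∧ s = {i}) ∨ s = ({1,2} : Finset (Fin (m+3))) := by
  constructor
  · intro hc
    by_cases h0 : 0 ∈ s
    · exact Or.inl h0
    obtain ⟨⟨x, hx⟩⟩ := hc.nonempty
    have hpos : 1 ≤ s.card := Finset.card_pos.mpr ⟨x, by simpa using hx⟩
    by_cases h1 : s.card = 1
    · obtain ⟨i, rfl⟩ := Finset.card_eq_one.mp h1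
      refine Or.inr (Or.inl ⟨i, fun h => h0 ?_, rfl⟩)
      rw [h]; exact Finset.mem_singleton_self 0
    · exact Or.inr (Or.inr (eq_pair_of_conn s h0 (by omega) hc))
  · rintro (h0 | ⟨i, _, rfl⟩ | rfl)
    · exact conn_of_zero_mem s h0
    · exact conn_singleton i
    · exact conn_pair

open Finset in
lemma count_aux14 (P : Finset (Fin (m+3)) → Prop)
    (hP : ∀ s, P s ↔ 0 ∈ s ∨ (∃ i, i ≠ (0 : Fin (m+3)) ∧ s = {i}) ∨ s = ({1,2} : Finset (Fin (m+3)))) :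
    Nat.card {s : Finset (Fin (m+3)) // P s} = (m+3) + 2 ^ (m+2) := by
  classical
  rw [Nat.card_eq_fintype_card, Fintype.card_subtype]
  have h12 : (1 : Fin (m+3)) ≠ 2 := Fin.ne_of_val_ne (by simp [Fin.val_one, Fin.val_two, Nat.mod_eq_of_lt (show 2 < m+3 by omega)])
  have h01 : (0 : Fin (m+3)) ∉ ({1,2} : Finset (Fin (m+3))) := by
    simp only [mem_insert, mem_singleton]
    push_neg
    exact ⟨Fin.ne_of_val_ne (by simp [Fin.val_one]), Fin.ne_of_val_ne (by simp [Fin.val_two, Nat.mod_eq_of_lt (show 2 < m+3 by omega)])⟩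
  set A : Finset (Finset (Fin (m+3))) := ((univ.erase 0).powerset.image (insert (0 : Fin (m+3)))) with hA
  set B : Finset (Finset (Fin (m+3))) := ((univ.erase 0).image (fun i => ({i} : Finset (Fin (m+3))))) with hB
  have hmemA : ∀ s, s ∈ A ↔ 0 ∈ s := by
    intro s
    simp only [hA, mem_image, mem_powerset]
    constructor
    · rintro ⟨t, _, rfl⟩; exact mem_insert_self 0 t
    · intro h
      refine ⟨s.erase 0, ?_, insert_erase h⟩
      exact erase_subset_erase 0 (subset_univ s)
  have heq : univ.filter P = A ∪ B ∪ {({1,2} : Finset (Fin (m+3)))} := by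
    ext s
    simp only [mem_filter, mem_univ, true_and, mem_union, mem_singleton, hP]
    constructor
    · rintro (h0 | ⟨i, hi, rfl⟩ | rfl)
      · exact Or.inl (Or.inl ((hmemA s).mpr h0))
      · exact Or.inl (Or.inr (by simp only [hB, mem_image]; exact ⟨i, by simp [hi], rfl⟩))
      · exact Or.inr rfl
    · rintro ((h | h) | rfl)
      · exact Or.inl ((hmemA s).mp h)
      · simp only [hB, mem_image, mem_erase] at h
        obtain ⟨i, ⟨hi, _⟩, rfl⟩ := h
        exact Or.inr (Or.inl ⟨i, hi, rfl⟩)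
      · exact Or.inr (Or.inr rfl)
  rw [heq]
  have hAB : ∀ s ∈ A ∪ B, s ≠ ({1,2} : Finset (Fin (m+3))) := by
    intro s hs
    rcases mem_union.mp hs with h | h
    · rintro rfl; exact h01 ((hmemA _).mp h)
    · simp only [hB, mem_image] at h
      obtain ⟨i, _, rfl⟩ := h
      intro h
      have := congrArg Finset.card h
      rw [card_singleton, Finset.card_pair h12] at this
      omega
  have hdisj : Disjoint A B := by
    rw [Finset.disjoint_left]
    intro s hsA hsB
    have h0s := (hmemA s).mp hsA
    simp only [hB, mem_image, mem_erase] at hsB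
    obtain ⟨i, ⟨hi, _⟩, rfl⟩ := hsB
    exact hi (Finset.mem_singleton.mp h0s).symm
  have hcardU : (univ.erase (0 : Fin (m+3))).card = m + 2 := by
    rw [card_erase_of_mem (mem_univ 0), card_univ, Fintype.card_fin]; omega
  have hcardA : A.card = 2 ^ (m+2) := by
    rw [hA, Finset.card_image_of_injOn, card_powerset, hcardU]
    intro t ht t' ht' h
    have h0t : (0 : Fin (m+3)) ∉ t := fun hc => (mem_erase.mp (mem_powerset.mp ht hc)).1 rfl
    have h0t' : (0 : Fin (m+3)) ∉ t' := fun hc => (mem_erase.mp (mem_powerset.mp ht' hc)).1 rfl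
    rw [← erase_insert h0t, ← erase_insert h0t', h]
  have hcardB : B.card = m + 2 := by
    rw [hB, Finset.card_image_of_injective _ Finset.singleton_injective, hcardU]
  have hdisj2 : Disjoint (A ∪ B) ({({1,2} : Finset (Fin (m+3)))} : Finset _) := by
    rw [Finset.disjoint_right]
    intro s hs
    rw [mem_singleton] at hs
    subst hs
    intro hc
    exact hAB _ hc rfl
  rw [card_union_of_disjoint hdisj2, card_union_of_disjoint hdisj, hcardA, hcardB, card_singleton]
  omega

end Aux14

theorem stmt14 (n : ℕ) (hn : 2 < n) : numConn (Qgraph n) = n + 2 ^ (n - 1) := by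
  obtain ⟨m, rfl⟩ : ∃ m, n = m + 3 := ⟨n - 3, by omega⟩
  rw [numConn, count_aux14 _ conn_iff]
  norm_num
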